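/- Let r be a continuous hazard rate with survival function F̄(t) = exp(−∫_0^t r), and φ(t) = r(t) ∫_0^t F̄ + F̄(t). If r is increasing on an interval [s₀,∞), then φ is increasing on [s₀,∞); if r is decreasing on [0,s₀], then φ is decreasing on [0,s₀]. -/

import Mathlib

open Set

/-- With `F̄(t) = exp(-∫_0^t r)` and
`φ(t) = r(t)∫_0^t F̄ + F̄(t)`: if `r` is increasing on `[s₀,∞)` then `φ` is
increasing there; if `r` is decreasing on `[0,s₀]` then `φ` is decreasing
there. -/
theorem phi_monotonicity
    (r F φ : ℝ → ℝ) (s₀ : ℝ) (hs₀ : 0 ≤ s₀)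
    (hr : Continuous r) (hrnn : ∀ t, 0 ≤ r t)
    (hF : ∀ t, F t = Real.exp (-(∫ x in (0:ℝ)..t, r x)))
    (hφ : ∀ t, φ t = r t * (∫ x in (0:ℝ)..t, F x) + F t) :
    (MonotoneOn r (Set.Ici s₀) → MonotoneOn φ (Set.Ici s₀)) ∧
    (AntitoneOn r (Set.Icc 0 s₀) → AntitoneOn φ (Set.Icc 0 s₀)) := by
  have hGderiv : ∀ t : ℝ, HasDerivAt (fun u => ∫ x in (0:ℝ)..u, r x) (r t) t := fun t =>
    intervalIntegral.integral_hasDerivAt_right (hr.intervalIntegrable 0 t)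
      (hr.stronglyMeasurableAtFilter _ _) hr.continuousAt
  have hFeq : F = fun u => Real.exp (-(∫ x in (0:ℝ)..u, r x)) := funext hF
  have hFderiv : ∀ t : ℝ, HasDerivAt F (-(r t * F t)) t := by
    intro t
    have h1 : HasDerivAt (fun u => Real.exp (-(∫ x in (0:ℝ)..u, r x)))
        (Real.exp (-(∫ x in (0:ℝ)..t, r x)) * (-(r t))) t := ((hGderiv t).neg).exp
    have h2 : -(r t * F t) = Real.exp (-(∫ x in (0:ℝ)..t, r x)) * (-(r t)) := by
      rw [hF t]; ring
    rw [h2, hFeq]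
    exact h1
  have hFcont : Continuous F := continuous_iff_continuousAt.2 fun t => (hFderiv t).continuousAt
  have hFpos : ∀ t, 0 < F t := fun t => by rw [hF t]; exact Real.exp_pos _
  have key : ∀ s t : ℝ, F t - F s = ∫ x in s..t, -(r x * F x) := fun s t =>
    (intervalIntegral.integral_eq_sub_of_hasDerivAt (fun x _ => hFderiv x)
      ((hr.mul hFcont).neg.intervalIntegrable s t)).symm
  have ident : ∀ s t : ℝ, φ t - φ s =
      (r t - r s) * (∫ x in (0:ℝ)..s, F x) + ∫ x in s..t, (r t - r x) * F x := by
    intro s t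
    have h1 : (∫ x in (0:ℝ)..t, F x) = (∫ x in (0:ℝ)..s, F x) + ∫ x in s..t, F x :=
      (intervalIntegral.integral_add_adjacent_intervals (hFcont.intervalIntegrable 0 s)
        (hFcont.intervalIntegrable s t)).symm
    have h2 : (∫ x in s..t, (r t - r x) * F x)
        = r t * (∫ x in s..t, F x) - ∫ x in s..t, r x * F x := by
      rw [← intervalIntegral.integral_const_mul, ← intervalIntegral.integral_sub (f := fun x => r t * F x) (g := fun x => r x * F x)
        ((continuous_const.mul hFcont).intervalIntegrable s t)
        ((hr.mul hFcont).intervalIntegrable s t)]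
      simp only [sub_mul]
    have h3 : F t - F s = -∫ x in s..t, r x * F x := by
      rw [key s t, intervalIntegral.integral_neg]
    rw [hφ t, hφ s, h1, h2]
    linear_combination h3
  constructor
  · intro hmono s hs t ht hst
    have hA : 0 ≤ ∫ x in (0:ℝ)..s, F x :=
      intervalIntegral.integral_nonneg (le_trans hs₀ hs) (fun x _ => (hFpos x).le)
    have hB : 0 ≤ ∫ x in s..t, (r t - r x) * F x :=
      intervalIntegral.integral_nonneg hst (fun x hx =>
        mul_nonneg (sub_nonneg.2 (hmono (le_trans hs hx.1) ht hx.2)) (hFpos x).le)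
    have h := ident s t
    nlinarith [mul_nonneg (sub_nonneg.2 (hmono hs ht hst)) hA]
  · intro hanti s hs t ht hst
    have hA : 0 ≤ ∫ x in (0:ℝ)..s, F x :=
      intervalIntegral.integral_nonneg hs.1 (fun x _ => (hFpos x).le)
    have hB : (∫ x in s..t, (r t - r x) * F x) ≤ 0 := by
      have : 0 ≤ ∫ x in s..t, (r x - r t) * F x :=
        intervalIntegral.integral_nonneg hst (fun x hx =>
          mul_nonneg (sub_nonneg.2 (hanti ⟨le_trans hs.1 hx.1, le_trans hx.2 ht.2⟩ ht hx.2))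
            (hFpos x).le)
      have heq : (∫ x in s..t, (r t - r x) * F x) = -∫ x in s..t, (r x - r t) * F x := by
        rw [← intervalIntegral.integral_neg]; congr 1; funext x; ring
      rw [heq]; linarith
    have h := ident s t
    nlinarith [mul_nonpos_of_nonpos_of_nonneg (sub_nonpos.2 (hanti hs ht hst)) hA]
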